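/- Let i ≥ 1 and j ≥ 0 be integers and let A be a symmetric n×n matrix with entries in {0,1}, with i + j + 1 ≤ n and eigenvalues λ_1 ≥ ⋯ ≥ λ_n. If equality λ_{i+1}(A) − λ_{n−j}(A) = (n/2)·√((i+j+1)/(i(j+1))) holds, then λ_1 = n/2, λ_2 = ⋯ = λ_{i+1} = (n/2)·√((j+1)/(i(i+j+1))), λ_{n−j} = ⋯ = λ_n = −(n/2)·√(i/((j+1)(i+j+1))), and λ_{i+2} = ⋯ = λ_{n−j−1} = 0. -/

import Mathlib

open Matrix Finset in
lemma sum_sq_eig' {n : ℕ} (A : Matrix (Fin n) (Fin n) ℝ) (hA : A.IsHermitian) :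
    ∑ k, hA.eigenvalues k ^ 2 = (A * A).trace := by
  set U := (hA.eigenvectorUnitary : Matrix (Fin n) (Fin n) ℝ) with hUdef
  have hU : U * star U = 1 := (Matrix.mem_unitaryGroup_iff).mp hA.eigenvectorUnitary.2
  have hU' : star U * U = 1 := (Matrix.mem_unitaryGroup_iff').mp hA.eigenvectorUnitary.2
  set D : Matrix (Fin n) (Fin n) ℝ := Matrix.diagonal (RCLike.ofReal ∘ hA.eigenvalues) with hDdef
  have hspec : A = U * D * star U := hA.spectral_theorem
  have h2 : A * A = U * (D * D) * star U := by
    rw [hspec]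
    rw [show U * D * star U * (U * D * star U) = U * D * (star U * U) * D * star U by
      noncomm_ring]
    rw [hU']
    noncomm_ring
  rw [h2, Matrix.trace_mul_cycle, ← Matrix.mul_assoc, hU', Matrix.one_mul]
  rw [hDdef, Matrix.diagonal_mul_diagonal, Matrix.trace_diagonal]
  simp [pow_two]

open Matrix in
lemma rayleigh_bound' {n : ℕ} (A : Matrix (Fin n) (Fin n) ℝ) (hA : A.IsHermitian)
    (L : ℝ) (hL : ∀ k, hA.eigenvalues k ≤ L) (x : Fin n → ℝ) :
    x ⬝ᵥ A.mulVec x ≤ L * (x ⬝ᵥ x) := by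
  set U := (hA.eigenvectorUnitary : Matrix (Fin n) (Fin n) ℝ) with hUdef
  have hU : U * star U = 1 := (Matrix.mem_unitaryGroup_iff).mp hA.eigenvectorUnitary.2
  have hspec : A = U * Matrix.diagonal (RCLike.ofReal ∘ hA.eigenvalues) * star U :=
    hA.spectral_theorem
  have hdiag : (Matrix.diagonal (fun k => L - hA.eigenvalues k)).PosSemidef :=
    Matrix.posSemidef_diagonal_iff.mpr fun k => by linarith [hL k]
  have hM : (L • (1 : Matrix (Fin n) (Fin n) ℝ) - A)
      = U * Matrix.diagonal (fun k => L - hA.eigenvalues k) * star U := by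
    have h1 : Matrix.diagonal (fun k : Fin n => L - hA.eigenvalues k)
        = L • (1 : Matrix (Fin n) (Fin n) ℝ) - Matrix.diagonal (RCLike.ofReal ∘ hA.eigenvalues) := by
      rw [Matrix.smul_one_eq_diagonal, ← Matrix.diagonal_sub]
      rfl
    rw [h1, Matrix.mul_sub, Matrix.sub_mul, ← hspec, Matrix.mul_smul, Matrix.mul_one,
      Matrix.smul_mul, hU]
  have hps : (L • (1 : Matrix (Fin n) (Fin n) ℝ) - A).PosSemidef := by
    rw [hM]
    exact hdiag.mul_mul_conjTranspose_same U
  have h := hps.dotProduct_mulVec_nonneg x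
  simp only [star_trivial, Matrix.sub_mulVec, Matrix.smul_mulVec, Matrix.one_mulVec,
    dotProduct_sub, dotProduct_smul, smul_eq_mul] at h
  linarith

lemma spread_alg (N a b c x y xp yp m0 R : ℝ)
    (ha : 0 < a) (hb : 0 < b)
    (hcab : c * (a * b) = a + b)
    (hR0 : 0 ≤ R) (hRsq : R ^ 2 = N ^ 2 / 4 * c)
    (hxxp : x ≤ xp) (hyyp : y ≤ yp) (hxp0 : 0 ≤ xp) (hyp0 : 0 ≤ yp)
    (hmain : m0 ^ 2 + a * xp ^ 2 + b * yp ^ 2 ≤ N * m0)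
    (hxy : x + y = R) :
    m0 = N / 2 ∧ x = xp ∧ y = yp ∧ a * x = b * y ∧ a * x ^ 2 + b * y ^ 2 = N ^ 2 / 4 := by
  have hab : 0 < a * b := mul_pos ha hb
  have habpos : 0 < a + b := by linarith
  have hQle : a * xp ^ 2 + b * yp ^ 2 ≤ N ^ 2 / 4 := by
    have hexp : (m0 - N / 2) ^ 2 = m0 ^ 2 - N * m0 + N ^ 2 / 4 := by ring
    linarith [hmain, sq_nonneg (m0 - N / 2), hexp]
  have hCS : (xp + yp) ^ 2 * (a * b) ≤ (a * xp ^ 2 + b * yp ^ 2) * (a + b) := by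
    have hexp : (a * xp ^ 2 + b * yp ^ 2) * (a + b) - (xp + yp) ^ 2 * (a * b)
        = (a * xp - b * yp) ^ 2 := by ring
    linarith [sq_nonneg (a * xp - b * yp), hexp]
  have hsq_le : (xp + yp) ^ 2 ≤ R ^ 2 := by
    rw [hRsq]
    have h1 : (xp + yp) ^ 2 * (a * b) ≤ N ^ 2 / 4 * (a + b) := by
      have := mul_le_mul_of_nonneg_right hQle habpos.le
      linarith [hCS]
    rw [← hcab] at h1
    have h2 : (xp + yp) ^ 2 * (a * b) ≤ (N ^ 2 / 4 * c) * (a * b) := by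
      rw [mul_comm c (a*b), ← mul_assoc] at h1
      linarith
    exact le_of_mul_le_mul_right h2 hab
  have hle : xp + yp ≤ R := le_of_pow_le_pow_left₀ two_ne_zero hR0 hsq_le
  have hxeq : x = xp := by linarith
  have hyeq : y = yp := by linarith
  rw [← hxeq, ← hyeq] at hQle hCS hmain
  have hxyR : (x + y) ^ 2 = N ^ 2 / 4 * c := by rw [hxy, hRsq]
  have h2 : (x + y) ^ 2 * (a * b) = N ^ 2 / 4 * (a + b) := by
    rw [hxyR, ← hcab]; ring
  have h3 : N ^ 2 / 4 * (a + b) ≤ (a * x ^ 2 + b * y ^ 2) * (a + b) := by linarith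
  have h4 : N ^ 2 / 4 ≤ a * x ^ 2 + b * y ^ 2 := le_of_mul_le_mul_right (by linarith) habpos
  have hQ : a * x ^ 2 + b * y ^ 2 = N ^ 2 / 4 := le_antisymm hQle h4
  have haxby : a * x = b * y := by
    have hid : (a * x - b * y) ^ 2
        = (a * x ^ 2 + b * y ^ 2) * (a + b) - (x + y) ^ 2 * (a * b) := by ring
    have h0 : (a * x - b * y) ^ 2 = 0 := by rw [hid, hQ, h2]; ring
    have := pow_eq_zero_iff (n := 2) (by norm_num) |>.mp h0
    linarith
  have hm0 : m0 = N / 2 := by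
    have hexp : (2 * m0 - N) ^ 2 = 4 * m0 ^ 2 - 4 * (N * m0) + N ^ 2 := by ring
    have h5 : (2 * m0 - N) ^ 2 ≤ 0 := by linarith [hmain, hQ, hexp]
    have h6 : (2 * m0 - N) ^ 2 = 0 := le_antisymm h5 (sq_nonneg _)
    have h7 := pow_eq_zero_iff (n := 2) (by norm_num) |>.mp h6
    linarith
  exact ⟨hm0, hxeq, hyeq, haxby, hQ⟩

lemma sq_eq_up' (u v : ℝ) (h0 : 0 ≤ u) (huv : u ≤ v) (hsq : u ^ 2 = v ^ 2) : v = u := by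
  nlinarith

lemma sq_eq_down' (u v : ℝ) (h0 : 0 ≤ u) (huv : v ≤ -u) (hsq : u ^ 2 = v ^ 2) : v = -u := by
  nlinarith

lemma sq_le_up' (x t : ℝ) (hxt : x ≤ t) : max x 0 ^ 2 ≤ t ^ 2 := by
  rcases le_or_gt 0 x with h | h
  · rw [max_eq_left h]
    exact pow_le_pow_left₀ h hxt 2
  · rw [max_eq_right h.le]
    simpa using sq_nonneg t

lemma sq_le_down' (y t : ℝ) (hyt : t ≤ -y) : max y 0 ^ 2 ≤ t ^ 2 := by
  rcases le_or_gt 0 y with h | h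
  · rw [max_eq_left h]
    nlinarith
  · rw [max_eq_right h.le]
    simpa using sq_nonneg t

open Matrix in
set_option maxHeartbeats 1000000 in
/-- Equality case of the `(i,j)`-spread bound: if equality
`λ_{i+1}(A) - λ_{n-j}(A) = (n/2) √((i+j+1)/(i(j+1)))` holds, then the spectrum is determined:
`λ_1 = n/2`, `λ_2 = ⋯ = λ_{i+1} = (n/2)√((j+1)/(i(i+j+1)))`,
`λ_{n-j} = ⋯ = λ_n = -(n/2)√(i/((j+1)(i+j+1)))` and `λ_{i+2} = ⋯ = λ_{n-j-1} = 0`. -/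
theorem spread_ij_equality_case (n i j : ℕ) (hi : 1 ≤ i) (hn : i + j + 1 ≤ n)
    (A : Matrix (Fin n) (Fin n) ℝ) (hA : A.IsHermitian)
    (hA01 : ∀ a b, A a b = 0 ∨ A a b = 1)
    (μ : Fin n → ℝ) (hmono : Antitone μ)
    (hperm : Finset.univ.val.map μ = Finset.univ.val.map hA.eigenvalues)
    (heq : μ ⟨i, by omega⟩ - μ ⟨n - j - 1, by omega⟩ =
      ((n : ℝ) / 2) * Real.sqrt (((i : ℝ) + j + 1) / ((i : ℝ) * ((j : ℝ) + 1)))) :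
    μ ⟨0, by omega⟩ = (n : ℝ) / 2 ∧
    (∀ k : Fin n, 1 ≤ (k : ℕ) → (k : ℕ) ≤ i →
      μ k = ((n : ℝ) / 2) * Real.sqrt (((j : ℝ) + 1) / ((i : ℝ) * ((i : ℝ) + j + 1)))) ∧
    (∀ k : Fin n, n - j - 1 ≤ (k : ℕ) →
      μ k = -(((n : ℝ) / 2) * Real.sqrt ((i : ℝ) / (((j : ℝ) + 1) * ((i : ℝ) + j + 1))))) ∧
    (∀ k : Fin n, i + 1 ≤ (k : ℕ) → (k : ℕ) ≤ n - j - 2 → μ k = 0) := by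
  have hn0 : 0 < n := by omega
  have hpi : i < n := by omega
  have hpb : n - j - 1 < n := by omega
  obtain ⟨a, ha_def⟩ : ∃ t : ℝ, t = (i : ℝ) := ⟨_, rfl⟩
  obtain ⟨b, hb_def⟩ : ∃ t : ℝ, t = (j : ℝ) + 1 := ⟨_, rfl⟩
  have hipos : (0:ℝ) < (i:ℝ) := by exact_mod_cast hi
  have ha : (0:ℝ) < a := by rw [ha_def]; exact hipos
  have hb : (0:ℝ) < b := by rw [hb_def]; positivity
  obtain ⟨c, hc_def⟩ : ∃ t : ℝ, t = ((i : ℝ) + j + 1) / ((i : ℝ) * ((j : ℝ) + 1)) := ⟨_, rfl⟩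
  have hc : 0 < c := by
    rw [hc_def]
    have h1 : (0:ℝ) < (i : ℝ) + j + 1 := by positivity
    have h2 : (0:ℝ) < (i : ℝ) * ((j : ℝ) + 1) := by positivity
    positivity
  have hcab : c * (a * b) = a + b := by
    rw [hc_def, ha_def, hb_def]
    field_simp
    ring
  obtain ⟨RHS, hRHS_def⟩ : ∃ t : ℝ, t = ((n : ℝ) / 2) * Real.sqrt c := ⟨_, rfl⟩
  have hRHS0 : 0 ≤ RHS := by rw [hRHS_def]; positivity
  have hRHSsq : RHS ^ 2 = (n:ℝ)^2/4 * c := by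
    rw [hRHS_def, mul_pow, Real.sq_sqrt hc.le]; ring
  have heq1 : μ ⟨i, hpi⟩ - μ ⟨n - j - 1, hpb⟩ = RHS := by
    rw [hRHS_def, hc_def]; exact heq
  -- step: n ≥ i + j + 2
  have hn2 : i + j + 2 ≤ n := by
    by_contra hcon
    have hf : (⟨i, hpi⟩ : Fin n) = ⟨n - j - 1, hpb⟩ := by
      apply Fin.ext; simp; omega
    rw [hf, sub_self] at heq1
    have hRHSpos : 0 < RHS := by
      rw [hRHS_def]
      have h1 : 0 < Real.sqrt c := Real.sqrt_pos.mpr hc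
      have hnr : (0:ℝ) < (n:ℝ) := by exact_mod_cast hn0
      positivity
    linarith
  -- named quantities
  obtain ⟨μ0, hμ0_def⟩ : ∃ t : ℝ, t = μ ⟨0, hn0⟩ := ⟨_, rfl⟩
  obtain ⟨x, hx_def⟩ : ∃ t : ℝ, t = μ ⟨i, hpi⟩ := ⟨_, rfl⟩
  obtain ⟨y, hy_def⟩ : ∃ t : ℝ, t = -μ ⟨n - j - 1, hpb⟩ := ⟨_, rfl⟩
  have heq' : x + y = RHS := by rw [hx_def, hy_def]; linarith
  obtain ⟨xp, hxp_def⟩ : ∃ t : ℝ, t = max x 0 := ⟨_, rfl⟩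
  obtain ⟨yp, hyp_def⟩ : ∃ t : ℝ, t = max y 0 := ⟨_, rfl⟩
  have hxp0 : 0 ≤ xp := by rw [hxp_def]; exact le_max_right _ _
  have hyp0 : 0 ≤ yp := by rw [hyp_def]; exact le_max_right _ _
  have hxxp : x ≤ xp := by rw [hxp_def]; exact le_max_left _ _
  have hyyp : y ≤ yp := by rw [hyp_def]; exact le_max_left _ _
  -- sum of squares of μ equals sum over eigenvalues
  have hS2eig : ∑ k, μ k ^ 2 = ∑ k, hA.eigenvalues k ^ 2 := by
    have h1 : ∑ k, μ k ^ 2 = ((Finset.univ.val.map μ).map (fun t => t ^ 2)).sum := by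
      rw [Multiset.map_map]; rfl
    have h2 : ∑ k, hA.eigenvalues k ^ 2
        = ((Finset.univ.val.map hA.eigenvalues).map (fun t => t ^ 2)).sum := by
      rw [Multiset.map_map]; rfl
    rw [h1, h2, hperm]
  -- μ0 is at least every eigenvalue
  have hL : ∀ k, hA.eigenvalues k ≤ μ0 := by
    intro k
    have hmem : hA.eigenvalues k ∈ Finset.univ.val.map hA.eigenvalues :=
      Multiset.mem_map_of_mem _ (Finset.mem_univ_val _)
    rw [← hperm] at hmem
    obtain ⟨k', _, hk'⟩ := Multiset.mem_map.mp hmem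
    rw [← hk', hμ0_def]
    exact hmono (by simp [Fin.le_def])
  -- trace bound
  have htrace : ∑ k, μ k ^ 2 ≤ (n:ℝ) * μ0 := by
    rw [hS2eig, sum_sq_eig' A hA]
    have h1 : (A * A).trace = ∑ p, ∑ q, A p q * A q p := by
      simp [Matrix.trace, Matrix.mul_apply, Matrix.diag]
    have h2 : ∀ p q, A p q * A q p = A p q := by
      intro p q
      have hsym : A q p = A p q := by
        have := hA.apply p q
        simpa using this
      rw [hsym]
      rcases hA01 p q with h | h <;> rw [h] <;> ring
    have h3 : (A * A).trace = ∑ p, ∑ q, A p q := by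
      rw [h1]
      exact Finset.sum_congr rfl fun p _ => Finset.sum_congr rfl fun q _ => h2 p q
    have h4 := rayleigh_bound' A hA μ0 hL (fun _ : Fin n => (1:ℝ))
    have h5 : (fun _ : Fin n => (1:ℝ)) ⬝ᵥ A.mulVec (fun _ : Fin n => (1:ℝ))
        = ∑ p, ∑ q, A p q := by
      simp [dotProduct, Matrix.mulVec]
    have h6 : ((fun _ : Fin n => (1:ℝ)) ⬝ᵥ (fun _ : Fin n => (1:ℝ)) : ℝ) = (n:ℝ) := by
      simp [dotProduct]
    rw [h3]
    rw [h5, h6] at h4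
    linarith
  -- the lower-bound function
  obtain ⟨G, hG_def⟩ : ∃ g : ℕ → ℝ, g = fun m =>
      if m = 0 then μ0 ^ 2 else if m ≤ i then xp ^ 2 else if n - j - 1 ≤ m then yp ^ 2 else 0 :=
    ⟨_, rfl⟩
  have hGle : ∀ k : Fin n, G (k : ℕ) ≤ μ k ^ 2 := by
    intro k
    rw [hG_def]
    by_cases h0 : (k : ℕ) = 0
    · have hk : k = ⟨0, hn0⟩ := Fin.ext h0
      rw [hk]
      simp [h0, ← hμ0_def]
    · simp only [h0, if_false]
      by_cases h1 : (k : ℕ) ≤ i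
      · simp only [h1, if_true]
        have hxk : x ≤ μ k := by
          rw [hx_def]
          exact hmono (by simp [Fin.le_def]; omega)
        rw [hxp_def]
        exact sq_le_up' x (μ k) hxk
      · simp only [h1, if_false]
        by_cases h2 : n - j - 1 ≤ (k : ℕ)
        · simp only [h2, if_true]
          have hyk : μ k ≤ -y := by
            rw [hy_def, neg_neg]
            exact hmono (by simp [Fin.le_def]; omega)
          rw [hyp_def]
          exact sq_le_down' y (μ k) hyk
        · simp only [h2, if_false]
          positivity
  -- sum of G
  have hGsum : ∑ k : Fin n, G (k : ℕ) = μ0 ^ 2 + a * xp ^ 2 + b * yp ^ 2 := by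
    rw [Fin.sum_univ_eq_sum_range]
    rw [Finset.range_eq_Ico]
    rw [← Finset.sum_Ico_consecutive _ (Nat.zero_le (i+1)) (by omega : i + 1 ≤ n)]
    rw [← Finset.sum_Ico_consecutive _ (by omega : i + 1 ≤ n - j - 1) (by omega : n - j - 1 ≤ n)]
    rw [← Finset.sum_Ico_consecutive _ (Nat.zero_le 1) (by omega : 1 ≤ i + 1)]
    have s1 : ∑ m ∈ Finset.Ico 0 1, G m = μ0 ^ 2 := by
      simp [hG_def]
    have s2 : ∑ m ∈ Finset.Ico 1 (i+1), G m = a * xp ^ 2 := by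
      have hconst : ∀ m ∈ Finset.Ico 1 (i+1), G m = xp ^ 2 := by
        intro m hm
        rw [Finset.mem_Ico] at hm
        rw [hG_def]
        simp only
        rw [if_neg (by omega), if_pos (by omega)]
      rw [Finset.sum_congr rfl hconst, Finset.sum_const, Nat.card_Ico, nsmul_eq_mul, ha_def]
      norm_num
    have s3 : ∑ m ∈ Finset.Ico (i+1) (n-j-1), G m = 0 := by
      apply Finset.sum_eq_zero
      intro m hm
      rw [Finset.mem_Ico] at hm
      rw [hG_def]
      simp only
      rw [if_neg (by omega), if_neg (by omega), if_neg (by omega)]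
    have s4 : ∑ m ∈ Finset.Ico (n-j-1) n, G m = b * yp ^ 2 := by
      have hconst : ∀ m ∈ Finset.Ico (n-j-1) n, G m = yp ^ 2 := by
        intro m hm
        rw [Finset.mem_Ico] at hm
        rw [hG_def]
        simp only
        rw [if_neg (by omega), if_neg (by omega), if_pos (by omega)]
      rw [Finset.sum_congr rfl hconst, Finset.sum_const, Nat.card_Ico, nsmul_eq_mul, hb_def]
      have hcard : n - (n - j - 1) = j + 1 := by omega
      rw [hcard]
      push_cast
      ring
    rw [s1, s2, s3, s4]
    ring
  -- main inequality chain
  have hsumle : ∑ k : Fin n, G (k:ℕ) ≤ ∑ k, μ k ^ 2 := Finset.sum_le_sum fun k _ => hGle k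
  have hmain : μ0 ^ 2 + a * xp ^ 2 + b * yp ^ 2 ≤ (n:ℝ) * μ0 := by
    rw [← hGsum]
    linarith
  obtain ⟨hμ0val, hxeq, hyeq, haxby, hQ⟩ :=
    spread_alg (n:ℝ) a b c x y xp yp μ0 RHS ha hb hcab hRHS0 hRHSsq hxxp hyyp hxp0 hyp0 hmain heq'
  have hx0 : 0 ≤ x := hxeq ▸ hxp0
  have hy0 : 0 ≤ y := hyeq ▸ hyp0
  rw [← hxeq, ← hyeq] at hGsum
  -- pointwise equality of squares
  have hsum_eq : ∑ k : Fin n, G (k:ℕ) = ∑ k, μ k ^ 2 := by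
    have hGval : ∑ k : Fin n, G (k:ℕ) = (n:ℝ) * μ0 := by
      rw [hGsum, hμ0val]
      linear_combination hQ
    have hup : ∑ k, μ k ^ 2 ≤ ∑ k : Fin n, G (k:ℕ) := by
      rw [hGval]
      exact htrace
    exact le_antisymm hsumle hup
  have hptwise : ∀ k : Fin n, G (k:ℕ) = μ k ^ 2 :=
    fun k => (Finset.sum_eq_sum_iff_of_le (fun k _ => hGle k)).mp hsum_eq k (Finset.mem_univ k)
  -- value computations
  have habpos : 0 < a + b := by linarith
  have hx2 : x ^ 2 * (a * (a + b)) = (n:ℝ)^2/4 * b := by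
    linear_combination (a * x + b * y) * haxby + b * hQ
  have hy2 : y ^ 2 * (b * (a + b)) = (n:ℝ)^2/4 * a := by
    linear_combination (-(a * x + b * y)) * haxby + a * hQ
  obtain ⟨X, hX_def⟩ : ∃ t : ℝ,
      t = ((n : ℝ) / 2) * Real.sqrt (((j : ℝ) + 1) / ((i : ℝ) * ((i : ℝ) + j + 1))) := ⟨_, rfl⟩
  obtain ⟨Y, hY_def⟩ : ∃ t : ℝ,
      t = ((n : ℝ) / 2) * Real.sqrt ((i : ℝ) / (((j : ℝ) + 1) * ((i : ℝ) + j + 1))) := ⟨_, rfl⟩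
  have hX0 : 0 ≤ X := by rw [hX_def]; positivity
  have hY0 : 0 ≤ Y := by rw [hY_def]; positivity
  have hXarg : ((j : ℝ) + 1) / ((i : ℝ) * ((i : ℝ) + j + 1)) = b / (a * (a+b)) := by
    rw [ha_def, hb_def]; ring_nf
  have hYarg : ((i : ℝ)) / (((j : ℝ) + 1) * ((i : ℝ) + j + 1)) = a / (b * (a+b)) := by
    rw [ha_def, hb_def]; ring_nf
  have hX2 : X ^ 2 = (n:ℝ)^2/4 * (b / (a * (a+b))) := by
    rw [hX_def, hXarg, mul_pow, Real.sq_sqrt (by positivity)]; ring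
  have hY2 : Y ^ 2 = (n:ℝ)^2/4 * (a / (b * (a+b))) := by
    rw [hY_def, hYarg, mul_pow, Real.sq_sqrt (by positivity)]; ring
  have hxX : x = X := by
    have h1 : x ^ 2 = X ^ 2 := by
      rw [hX2, ← mul_div_assoc, eq_div_iff (by positivity : a * (a + b) ≠ 0)]
      exact hx2
    calc x = Real.sqrt (x^2) := (Real.sqrt_sq hx0).symm
    _ = Real.sqrt (X^2) := by rw [h1]
    _ = X := Real.sqrt_sq hX0
  have hyY : y = Y := by
    have h1 : y ^ 2 = Y ^ 2 := by
      rw [hY2, ← mul_div_assoc, eq_div_iff (by positivity : b * (a + b) ≠ 0)]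
      exact hy2
    calc y = Real.sqrt (y^2) := (Real.sqrt_sq hy0).symm
    _ = Real.sqrt (Y^2) := by rw [h1]
    _ = Y := Real.sqrt_sq hY0
  refine ⟨?_, ?_, ?_, ?_⟩
  · show μ ⟨0, hn0⟩ = (n:ℝ)/2
    rw [← hμ0_def]
    exact hμ0val
  · intro k hk1 hki
    have hg := hptwise k
    rw [hG_def] at hg
    simp only at hg
    rw [if_neg (by omega), if_pos hki, ← hxeq] at hg
    have hxk : x ≤ μ k := by
      rw [hx_def]; exact hmono (by simp [Fin.le_def]; omega)
    have hμk : μ k = x := sq_eq_up' x (μ k) hx0 hxk hg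
    rw [hμk, hxX, hX_def]
  · intro k hk
    have hg := hptwise k
    rw [hG_def] at hg
    simp only at hg
    rw [if_neg (by omega), if_neg (by omega), if_pos hk, ← hyeq] at hg
    have hyk : μ k ≤ -y := by
      rw [hy_def, neg_neg]; exact hmono (by simp [Fin.le_def]; omega)
    have hμk : μ k = -y := sq_eq_down' y (μ k) hy0 hyk hg
    rw [hμk, hyY, hY_def]
  · intro k hk1 hk2
    have hg := hptwise k
    rw [hG_def] at hg
    simp only at hg
    rw [if_neg (by omega), if_neg (by omega), if_neg (by omega)] at hg
    exact pow_eq_zero_iff (by norm_num : (2:ℕ) ≠ 0) |>.mp hg.symm
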